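/- Let D ⊆ ℂ be open, let (fₙ) be a sequence of continuous functions on D converging locally uniformly to a function f on D, let (zₙ) be a sequence in D converging to z₀ ∈ D, let (ρₙ) be a sequence of positive reals converging to 0, and let (gₙ) be a sequence of holomorphic functions on D such that the rescaled functions Gₙ(ξ) = gₙ(zₙ + ρₙξ) converge locally uniformly on ℂ to a nonconstant entire function g : ℂ → ℂ. If for each n, gₙ(z) ≠ fₙ(z) for all z ∈ D, then g(ξ) ≠ f(z₀) for all ξ ∈ ℂ. -/

import Mathlib

open Metric Filter Topology

section AvoidanceAux
open Complex


/-- A continuous nonvanishing function on a closed ball in ℂ has a continuous logarithm. -/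
lemma exists_continuous_log_closedBall (c : ℂ) (r : ℝ)
    (φ : ℂ → ℂ) (hφ : ContinuousOn φ (closedBall c r))
    (h0 : ∀ ξ ∈ closedBall c r, φ ξ ≠ 0) :
    ∃ h : ℂ → ℂ, ContinuousOn h (closedBall c r) ∧
      ∀ ξ ∈ closedBall c r, Complex.exp (h ξ) = φ ξ := by
  rcases lt_or_ge r 0 with hr | hr
  · exact ⟨0, continuousOn_const, fun ξ hξ => absurd hξ (by simp [closedBall_eq_empty.2 hr])⟩
  set K := closedBall c r with hK
  have hcK : c ∈ K := mem_closedBall_self hr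
  -- the contraction map stays in K
  have hmem : ∀ t ∈ Set.Icc (0:ℝ) 1, ∀ ξ ∈ K, c + (t:ℂ) * (ξ - c) ∈ K := by
    intro t ht ξ hξ
    rw [hK, mem_closedBall] at hξ ⊢
    calc dist (c + (t:ℂ)*(ξ-c)) c = ‖(t:ℂ)*(ξ-c)‖ := by
          rw [dist_eq]; congr 1; ring
      _ = |t| * dist ξ c := by rw [norm_mul, Complex.norm_real, Real.norm_eq_abs, dist_eq]
      _ ≤ 1 * r := mul_le_mul (abs_le.2 ⟨by linarith [ht.1], ht.2⟩) hξ dist_nonneg zero_le_one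
      _ = r := one_mul r
  -- the homotopy Φ on T = [0,1] × K
  set Φ : ℝ × ℂ → ℂ := fun p => φ (c + (p.1:ℂ) * (p.2 - c)) with hΦ
  set T : Set (ℝ × ℂ) := Set.Icc (0:ℝ) 1 ×ˢ K with hT
  have hTc : IsCompact T := isCompact_Icc.prod (isCompact_closedBall c r)
  have hTne : T.Nonempty := ⟨(0, c), ⟨⟨le_refl 0, zero_le_one⟩, hcK⟩⟩
  have hmapsto : ∀ p ∈ T, c + (p.1:ℂ) * (p.2 - c) ∈ K := fun p hp => hmem p.1 hp.1 p.2 hp.2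
  have hΦc : ContinuousOn Φ T := by
    apply hφ.comp _ hmapsto
    fun_prop
  -- positive lower bound ε on |Φ|
  obtain ⟨p₀, hp₀T, hp₀min⟩ := hTc.exists_isMinOn hTne (continuous_norm.comp_continuousOn hΦc)
  set ε : ℝ := ‖Φ p₀‖ with hε
  have hεpos : 0 < ε := by
    rw [hε]
    exact norm_pos_iff.2 (h0 _ (hmapsto _ hp₀T))
  have hlow : ∀ p ∈ T, ε ≤ ‖Φ p‖ := fun p hp => hp₀min hp
  -- uniform continuity: get δ
  have huc := hTc.uniformContinuousOn_of_continuous hΦc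
  rw [Metric.uniformContinuousOn_iff] at huc
  obtain ⟨δ, hδpos, hδ⟩ := huc ε hεpos
  obtain ⟨N, hN⟩ := exists_nat_one_div_lt hδpos
  set M : ℕ := N + 1 with hM
  have hMpos : 0 < (M:ℝ) := by positivity
  have hMδ : 1 / (M:ℝ) < δ := by rw [hM]; push_cast; exact hN
  -- partition functions
  set F : ℕ → ℂ → ℂ := fun j ξ => φ (c + ((j:ℝ)/(M:ℝ) : ℝ) * (ξ - c)) with hF
  have hjmem : ∀ j : ℕ, j ≤ M → ((j:ℝ)/(M:ℝ)) ∈ Set.Icc (0:ℝ) 1 := by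
    intro j hj
    constructor
    · positivity
    · rw [div_le_one hMpos]; exact_mod_cast hj
  have hFmem : ∀ j : ℕ, j ≤ M → ∀ ξ ∈ K, (c + (((j:ℝ)/(M:ℝ) : ℝ):ℂ) * (ξ - c)) ∈ K :=
    fun j hj ξ hξ => hmem _ (hjmem j hj) ξ hξ
  have hFne : ∀ j : ℕ, j ≤ M → ∀ ξ ∈ K, F j ξ ≠ 0 := fun j hj ξ hξ => h0 _ (hFmem j hj ξ hξ)
  have hFlow : ∀ j : ℕ, j ≤ M → ∀ ξ ∈ K, ε ≤ ‖F j ξ‖ := by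
    intro j hj ξ hξ
    exact hlow (((j:ℝ)/(M:ℝ)), ξ) ⟨hjmem j hj, hξ⟩
  have hclose : ∀ j : ℕ, j < M → ∀ ξ ∈ K,
      ‖F (j+1) ξ - F j ξ‖ < ε := by
    intro j hj ξ hξ
    have hd : dist (((j+1:ℕ):ℝ)/(M:ℝ)) (((j:ℕ):ℝ)/(M:ℝ)) < δ := by
      rw [Real.dist_eq]
      have : ((j+1:ℕ):ℝ)/(M:ℝ) - ((j:ℕ):ℝ)/(M:ℝ) = 1/(M:ℝ) := by push_cast; field_simp; ring
      rw [this, abs_of_pos (by positivity)]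
      exact hMδ
    have := hδ (((j+1:ℕ):ℝ)/(M:ℝ), ξ) ⟨hjmem (j+1) hj, hξ⟩ (((j:ℕ):ℝ)/(M:ℝ), ξ)
      ⟨hjmem j (le_of_lt hj), hξ⟩ (by simpa [Prod.dist_eq, hδpos] using hd)
    simpa [hΦ, hF, Complex.dist_eq] using this
  -- ratios lie in ball 1 1
  have hratio : ∀ j : ℕ, j < M → ∀ ξ ∈ K, F (j+1) ξ / F j ξ ∈ ball (1:ℂ) 1 := by
    intro j hj ξ hξ
    rw [mem_ball, dist_eq]
    have hne := hFne j (le_of_lt hj) ξ hξ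
    have heq : F (j+1) ξ / F j ξ - 1 = (F (j+1) ξ - F j ξ) / F j ξ := by field_simp
    rw [heq, norm_div, div_lt_one (norm_pos_iff.2 hne)]
    exact lt_of_lt_of_le (hclose j hj ξ hξ) (hFlow j (le_of_lt hj) ξ hξ)
  have hFcont : ∀ j : ℕ, j ≤ M → ContinuousOn (F j) K := by
    intro j hj
    apply hφ.comp _ (fun ξ hξ => hFmem j hj ξ hξ)
    fun_prop
  refine ⟨fun ξ => Complex.log (φ c) +
      ∑ j ∈ Finset.range M, Complex.log (F (j+1) ξ / F j ξ), ?_, ?_⟩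
  · apply ContinuousOn.add continuousOn_const
    apply continuousOn_finset_sum
    intro j hj
    rw [Finset.mem_range] at hj
    have : ContinuousOn (fun ξ => F (j+1) ξ / F j ξ) K :=
      (hFcont (j+1) hj).div (hFcont j (le_of_lt hj)) (fun ξ hξ => hFne j (le_of_lt hj) ξ hξ)
    exact this.clog (fun ξ hξ => Complex.ball_one_subset_slitPlane (hratio j hj ξ hξ))
  · intro ξ hξ
    have tel : ∀ k : ℕ, k ≤ M →
        Complex.exp (∑ j ∈ Finset.range k, Complex.log (F (j+1) ξ / F j ξ))
          = F k ξ / F 0 ξ := by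
      intro k
      induction k with
      | zero => intro _; simp [div_self (hFne 0 (Nat.zero_le M) ξ hξ)]
      | succ k ih =>
        intro hk
        have hkM : k ≤ M := by omega
        rw [Finset.sum_range_succ, Complex.exp_add, ih hkM,
          Complex.exp_log (div_ne_zero (hFne (k+1) hk ξ hξ) (hFne k hkM ξ hξ))]
        rw [div_mul_div_comm]
        rw [mul_comm (F 0 ξ) (F k ξ), ← div_div, mul_comm (F k ξ) (F (k+1) ξ),
          mul_div_assoc, div_self (hFne k hkM ξ hξ), mul_one]
    have hF0 : F 0 ξ = φ c := by simp [hF]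
    have hFM : F M ξ = φ ξ := by
      have : ((M:ℝ)/(M:ℝ)) = 1 := div_self (ne_of_gt hMpos)
      simp [hF, this]
    rw [Complex.exp_add, Complex.exp_log (h0 c hcK), tel M (le_refl M), hF0, hFM,
      mul_div_assoc', mul_comm, mul_div_assoc, div_self (h0 c hcK), mul_one]


/-- `(ξ - ξ₀)^k` has no continuous logarithm on a circle around `ξ₀`, for `k ≥ 1`. -/
lemma no_continuous_log_pow (ξ₀ : ℂ) (r : ℝ) (hr : 0 < r) (k : ℕ) (hk : 1 ≤ k)
    (H : ℂ → ℂ) (hH : ContinuousOn H (sphere ξ₀ r))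
    (hexp : ∀ ξ ∈ sphere ξ₀ r, Complex.exp (H ξ) = (ξ - ξ₀) ^ k) : False := by
  set γ : ℝ → ℂ := fun θ => ξ₀ + (r:ℂ) * Complex.exp ((θ:ℂ) * Complex.I) with hγ
  have hγmem : ∀ θ : ℝ, γ θ ∈ sphere ξ₀ r := by
    intro θ
    simp only [hγ, mem_sphere_iff_norm]
    rw [add_sub_cancel_left]
    rw [norm_mul]
    simp [Complex.norm_exp_ofReal_mul_I, abs_of_pos hr]
  have hγcont : Continuous γ := by fun_prop
  set q : ℝ → ℂ := fun θ => H (γ θ) - ((k:ℂ) * (θ:ℂ) * Complex.I + (k:ℂ) * Complex.log (r:ℂ))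
    with hq
  have hqcont : Continuous q := by
    apply Continuous.sub
    · exact (hH.comp_continuous hγcont hγmem)
    · fun_prop
  have hrne : (r:ℂ) ≠ 0 := by exact_mod_cast ne_of_gt hr
  have hq1 : ∀ θ : ℝ, Complex.exp (q θ) = 1 := by
    intro θ
    rw [hq]
    simp only
    rw [Complex.exp_sub, hexp (γ θ) (hγmem θ)]
    have h1 : γ θ - ξ₀ = (r:ℂ) * Complex.exp ((θ:ℂ) * Complex.I) := by rw [hγ]; ring
    rw [h1, mul_pow, ← Complex.exp_nat_mul, Complex.exp_add,
      Complex.exp_nat_mul (Complex.log (r:ℂ)) k, Complex.exp_log hrne]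
    have h3 : (k:ℂ) * ((θ:ℂ) * Complex.I) = (k:ℂ) * (θ:ℂ) * Complex.I := by ring
    rw [h3]
    rw [div_eq_one_iff_eq (mul_ne_zero (Complex.exp_ne_zero _) (pow_ne_zero _ hrne))]
    ring
  -- q θ has imaginary part in 2πℤ
  have hqint : ∀ θ : ℝ, ∃ m : ℤ, (q θ).im = 2 * Real.pi * m := by
    intro θ
    obtain ⟨n, hn⟩ := Complex.exp_eq_one_iff.1 (hq1 θ)
    refine ⟨n, ?_⟩
    rw [hn]
    simp [Complex.mul_im, Complex.mul_re]
    ring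
  set w : ℝ → ℝ := fun θ => (q θ).im with hw
  have hwcont : Continuous w := Complex.continuous_im.comp hqcont
  -- endpoints
  have hγeq : γ (2 * Real.pi) = γ 0 := by
    have h2 : ((2 * Real.pi : ℝ) : ℂ) * Complex.I = 2 * (Real.pi:ℂ) * Complex.I := by
      push_cast; ring
    rw [hγ]
    simp only [h2, Complex.exp_two_pi_mul_I]
    norm_num
  have hdiff : w 0 = w (2 * Real.pi) + 2 * Real.pi * k := by
    have : q 0 - q (2 * Real.pi) = (k:ℂ) * (2 * Real.pi : ℝ) * Complex.I := by
      rw [hq]; simp only [hγeq]; push_cast; ring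
    have him : (q 0).im - (q (2*Real.pi)).im = 2 * Real.pi * k := by
      rw [← Complex.sub_im, this]
      simp [Complex.mul_im, Complex.mul_re]
      ring
    rw [hw]; simp only; linarith
  -- IVT
  have hple : (0:ℝ) ≤ 2 * Real.pi := by positivity
  have hval : w (2 * Real.pi) + Real.pi ∈ Set.Icc (w (2*Real.pi)) (w 0) := by
    constructor
    · linarith [Real.pi_pos]
    · rw [hdiff]
      have : (1:ℝ) ≤ k := by exact_mod_cast hk
      nlinarith [Real.pi_pos]
  obtain ⟨θc, hθmem, hθeq⟩ := intermediate_value_Icc' hple hwcont.continuousOn hval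
  obtain ⟨m1, hm1⟩ := hqint θc
  obtain ⟨m2, hm2⟩ := hqint (2 * Real.pi)
  have hθeq' : (q θc).im = (q (2 * Real.pi)).im + Real.pi := hθeq
  rw [hm1, hm2] at hθeq'
  -- 2π m1 = 2π m2 + π  ⇒ 2 m1 = 2 m2 + 1, impossible
  have : (2 * m1 : ℝ) = 2 * m2 + 1 := by
    have hpi := Real.pi_pos
    have h : Real.pi * (2 * (m1:ℝ)) = Real.pi * (2 * (m2:ℝ) + 1) := by
      ring_nf
      ring_nf at hθeq'
      linarith
    exact mul_left_cancel₀ (ne_of_gt hpi) h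
  have : (2 * m1 : ℤ) = 2 * m2 + 1 := by exact_mod_cast this
  omega

/-- A continuous nonvanishing function on a closed disk cannot be closer to
`(ξ-ξ₀)^k · v` (with `v` nonvanishing, `k ≥ 1`) than that function itself on the
boundary circle. -/
lemma no_small_perturbation (ξ₀ : ℂ) (r : ℝ) (hr : 0 < r) (k : ℕ) (hk : 1 ≤ k)
    (Ψ v φ : ℂ → ℂ)
    (hfac : ∀ ξ ∈ closedBall ξ₀ r, Ψ ξ = (ξ - ξ₀) ^ k * v ξ)
    (hvc : ContinuousOn v (closedBall ξ₀ r))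
    (hvne : ∀ ξ ∈ closedBall ξ₀ r, v ξ ≠ 0)
    (hφc : ContinuousOn φ (closedBall ξ₀ r))
    (hφne : ∀ ξ ∈ closedBall ξ₀ r, φ ξ ≠ 0)
    (hclose : ∀ ξ ∈ sphere ξ₀ r, ‖Ψ ξ - φ ξ‖ < ‖φ ξ‖) :
    False := by
  have hsub : sphere ξ₀ r ⊆ closedBall ξ₀ r := sphere_subset_closedBall
  obtain ⟨hφ, hφcont, hφexp⟩ := exists_continuous_log_closedBall ξ₀ r φ hφc hφne
  obtain ⟨hv, hvcont, hvexp⟩ := exists_continuous_log_closedBall ξ₀ r v hvc hvne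
  have hratio : ∀ ξ ∈ sphere ξ₀ r, Ψ ξ / φ ξ ∈ ball (1:ℂ) 1 := by
    intro ξ hξ
    rw [mem_ball, dist_eq]
    have hφn := hφne ξ (hsub hξ)
    have heq : Ψ ξ / φ ξ - 1 = (Ψ ξ - φ ξ) / φ ξ := by field_simp
    rw [heq, norm_div, div_lt_one (norm_pos_iff.2 hφn)]
    exact hclose ξ hξ
  have hΨne : ∀ ξ ∈ sphere ξ₀ r, Ψ ξ ≠ 0 := by
    intro ξ hξ
    rw [hfac ξ (hsub hξ)]
    apply mul_ne_zero (pow_ne_zero _ _) (hvne ξ (hsub hξ))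
    intro h
    have : ξ ∈ sphere ξ₀ r := hξ
    rw [mem_sphere_iff_norm] at this
    rw [h] at this
    simp at this
    linarith
  have hΨc : ContinuousOn Ψ (sphere ξ₀ r) := by
    have : ContinuousOn (fun ξ => (ξ - ξ₀) ^ k * v ξ) (closedBall ξ₀ r) := by
      apply ContinuousOn.mul _ hvc
      fun_prop
    exact ((this.congr hfac).mono hsub)
  set H : ℂ → ℂ := fun ξ => hφ ξ + Complex.log (Ψ ξ / φ ξ) - hv ξ with hH
  apply no_continuous_log_pow ξ₀ r hr k hk H
  · apply ContinuousOn.sub (ContinuousOn.add (hφcont.mono hsub) _) (hvcont.mono hsub)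
    apply ContinuousOn.clog (hΨc.div (hφc.mono hsub) (fun ξ hξ => hφne ξ (hsub hξ)))
    exact fun ξ hξ => Complex.ball_one_subset_slitPlane (hratio ξ hξ)
  · intro ξ hξ
    rw [hH]
    simp only
    rw [Complex.exp_sub, Complex.exp_add, hφexp ξ (hsub hξ),
      Complex.exp_log (div_ne_zero (hΨne ξ hξ) (hφne ξ (hsub hξ))), hvexp ξ (hsub hξ)]
    rw [hfac ξ (hsub hξ)]
    field_simp [hφne ξ (hsub hξ), hvne ξ (hsub hξ)]

end AvoidanceAux

/-- Lappan's avoidance rescaling lemma, holomorphic version: if continuous `fₙ → f` locally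
uniformly on an open set `D`, `zₙ → z₀ ∈ D`, `ρₙ → 0⁺`, the holomorphic `gₙ` avoid the `fₙ`
on `D`, and the rescalings `ξ ↦ gₙ(zₙ + ρₙ ξ)` converge locally uniformly on `ℂ` to a
nonconstant entire function `g`, then `g` omits the value `f(z₀)`. -/
theorem avoidance_rescaling_lemma
    (D : Set ℂ) (hD : IsOpen D)
    (fseq : ℕ → ℂ → ℂ) (f : ℂ → ℂ)
    (hfc : ∀ n, ContinuousOn (fseq n) D)
    (hconv : TendstoLocallyUniformlyOn fseq f atTop D)
    (z : ℕ → ℂ) (hzD : ∀ n, z n ∈ D)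
    (z₀ : ℂ) (hz₀ : z₀ ∈ D) (hz : Tendsto z atTop (𝓝 z₀))
    (ρ : ℕ → ℝ) (hρpos : ∀ n, 0 < ρ n) (hρ : Tendsto ρ atTop (𝓝 0))
    (gseq : ℕ → ℂ → ℂ) (hg : ∀ n, DifferentiableOn ℂ (gseq n) D)
    (g : ℂ → ℂ) (hgent : Differentiable ℂ g)
    (hgnc : ¬ ∃ c : ℂ, ∀ ξ : ℂ, g ξ = c)
    (hresc : TendstoLocallyUniformly
      (fun n ξ => gseq n (z n + (ρ n : ℂ) * ξ)) g atTop)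
    (havoid : ∀ n, ∀ w ∈ D, gseq n w ≠ fseq n w) :
    ∀ ξ : ℂ, g ξ ≠ f z₀ := by
  intro ξ₀ hcontra
  set a : ℂ := f z₀ with ha
  set Ψ : ℂ → ℂ := fun ξ => g ξ - a with hΨdef
  have hΨ0 : Ψ ξ₀ = 0 := by rw [hΨdef]; simp [hcontra]
  have hgan : AnalyticAt ℂ Ψ ξ₀ := (hgent.analyticAt ξ₀).sub analyticAt_const
  -- Ψ is not eventually zero
  have hnev : ¬ ∀ᶠ ξ in 𝓝 ξ₀, Ψ ξ = 0 := by
    intro hev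
    apply hgnc
    refine ⟨a, ?_⟩
    have h1 : AnalyticOnNhd ℂ g Set.univ := fun x _ => hgent.analyticAt x
    have h2 : AnalyticOnNhd ℂ (fun _ : ℂ => a) Set.univ := fun x _ => analyticAt_const
    have hev' : g =ᶠ[𝓝 ξ₀] (fun _ => a) := by
      filter_upwards [hev] with ξ hξ
      rw [hΨdef] at hξ
      simpa [sub_eq_zero] using hξ
    have := h1.eqOn_of_preconnected_of_eventuallyEq h2 isPreconnected_univ
      (Set.mem_univ ξ₀) hev'
    exact fun ξ => this (Set.mem_univ ξ)
  -- factorization with finite order k ≥ 1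
  have hord : analyticOrderAt Ψ ξ₀ ≠ ⊤ := by
    simp only [Ne, analyticOrderAt_eq_top]
    exact hnev
  obtain ⟨k, hko'⟩ := WithTop.ne_top_iff_exists.1 hord
  have hko : analyticOrderAt Ψ ξ₀ = (k : ℕ∞) := hko'.symm
  obtain ⟨v, hvan, hvne0, hevfac⟩ := hgan.analyticOrderAt_eq_natCast.1 hko
  have hk1 : 1 ≤ k := by
    by_contra hklt
    have hk0 : k = 0 := by omega
    have := hevfac.self_of_nhds
    rw [hk0] at this
    simp at this
    rw [hΨ0] at this
    exact hvne0 this.symm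
  -- Ψ nonzero in a punctured neighborhood
  have hnz : ∀ᶠ ξ in 𝓝[≠] ξ₀, Ψ ξ ≠ 0 := by
    rcases hgan.eventually_eq_zero_or_eventually_ne_zero with hzz | hnz
    · exact absurd hzz hnev
    · exact hnz
  rw [eventually_nhdsWithin_iff] at hnz
  -- choose radius r
  have hvev : ∀ᶠ ξ in 𝓝 ξ₀, AnalyticAt ℂ v ξ := hvan.eventually_analyticAt
  have hEall := hevfac.and (hnz.and hvev)
  rw [Metric.eventually_nhds_iff] at hEall
  obtain ⟨ε₀, hε₀pos, hE⟩ := hEall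
  set r : ℝ := ε₀ / 2 with hrdef
  have hrpos : 0 < r := by positivity
  have hKsub : ∀ ξ ∈ closedBall ξ₀ r, dist ξ ξ₀ < ε₀ := by
    intro ξ hξ
    rw [mem_closedBall] at hξ
    linarith
  have hfac : ∀ ξ ∈ closedBall ξ₀ r, Ψ ξ = (ξ - ξ₀) ^ k * v ξ := by
    intro ξ hξ
    have := (hE (hKsub ξ hξ)).1
    simpa [smul_eq_mul] using this
  have hvc : ContinuousOn v (closedBall ξ₀ r) := by
    intro ξ hξ
    exact ((hE (hKsub ξ hξ)).2.2.continuousAt).continuousWithinAt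
  have hΨne : ∀ ξ ∈ closedBall ξ₀ r, ξ ≠ ξ₀ → Ψ ξ ≠ 0 := by
    intro ξ hξ hne
    exact (hE (hKsub ξ hξ)).2.1 (by simpa using hne)
  have hvne : ∀ ξ ∈ closedBall ξ₀ r, v ξ ≠ 0 := by
    intro ξ hξ
    rcases eq_or_ne ξ ξ₀ with h | h
    · rwa [h]
    · intro hv0
      apply hΨne ξ hξ h
      rw [hfac ξ hξ, hv0, mul_zero]
  -- minimum of |Ψ| on the sphere
  have hΨcont : Continuous Ψ := (hgent.continuous).sub continuous_const
  have hsne : (sphere ξ₀ r).Nonempty := NormedSpace.sphere_nonempty.2 (le_of_lt hrpos)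
  obtain ⟨ξm, hξm, hmin⟩ := (isCompact_sphere ξ₀ r).exists_isMinOn hsne
    (continuous_norm.comp hΨcont).continuousOn
  set m : ℝ := ‖Ψ ξm‖ with hm
  have hsphne : ∀ ξ ∈ sphere ξ₀ r, ξ ≠ ξ₀ := by
    intro ξ hξ h
    rw [h, mem_sphere_iff_norm] at hξ
    simp at hξ
    linarith
  have hmpos : 0 < m := by
    rw [hm]
    exact norm_pos_iff.2 (hΨne ξm (sphere_subset_closedBall hξm) (hsphne ξm hξm))
  have hmle : ∀ ξ ∈ sphere ξ₀ r, m ≤ ‖Ψ ξ‖ := fun ξ hξ => hmin hξ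
  -- a closed ball inside D around z₀
  obtain ⟨εD, hεDpos, hεDsub⟩ := Metric.isOpen_iff.1 hD z₀ hz₀
  -- continuity of f at z₀
  have hfcont : ContinuousOn f D := hconv.continuousOn (Frequently.of_forall hfc)
  have hfat : ContinuousAt f z₀ := hfcont.continuousAt (hD.mem_nhds hz₀)
  rw [Metric.continuousAt_iff] at hfat
  obtain ⟨δf, hδfpos, hδf⟩ := hfat (m/8) (by positivity)
  set ε₁ : ℝ := min (εD/2) (δf/2) with hε₁def
  have hε₁pos : 0 < ε₁ := by positivity
  have hK₀D : closedBall z₀ ε₁ ⊆ D := by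
    intro w hw
    apply hεDsub
    rw [mem_ball]
    rw [mem_closedBall] at hw
    calc dist w z₀ ≤ ε₁ := hw
      _ ≤ εD/2 := min_le_left _ _
      _ < εD := by linarith
  have hfball : ∀ w ∈ closedBall z₀ ε₁, dist (f w) a < m/8 := by
    intro w hw
    rw [mem_closedBall] at hw
    exact hδf (lt_of_le_of_lt hw (lt_of_le_of_lt (min_le_right _ _) (by linarith)))
  -- uniform convergence of fseq on closedBall z₀ ε₁
  have hfu : TendstoUniformlyOn fseq f atTop (closedBall z₀ ε₁) :=
    (tendstoLocallyUniformlyOn_iff_forall_isCompact hD).1 hconv _ hK₀D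
      (isCompact_closedBall _ _)
  rw [Metric.tendstoUniformlyOn_iff] at hfu
  have E2 := hfu (m/8) (by positivity)
  -- uniform convergence of rescalings on closedBall ξ₀ r
  have hGu : TendstoUniformlyOn (fun n ξ => gseq n (z n + (ρ n : ℂ) * ξ)) g atTop
      (closedBall ξ₀ r) :=
    (tendstoLocallyUniformly_iff_forall_isCompact.1 hresc) _ (isCompact_closedBall _ _)
  rw [Metric.tendstoUniformlyOn_iff] at hGu
  have E3 := hGu (m/4) (by positivity)
  -- eventually the rescaled points are in closedBall z₀ ε₁
  set R : ℝ := ‖ξ₀‖ + r with hRdef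
  have E1 : ∀ᶠ n in atTop, ∀ ξ ∈ closedBall ξ₀ r, z n + (ρ n : ℂ) * ξ ∈ closedBall z₀ ε₁ := by
    have htend : Tendsto (fun n => dist (z n) z₀ + ρ n * R) atTop (𝓝 0) := by
      have h1 : Tendsto (fun n => dist (z n) z₀) atTop (𝓝 0) :=
        (tendsto_iff_dist_tendsto_zero).1 hz
      have h2 : Tendsto (fun n => ρ n * R) atTop (𝓝 (0 * R)) := hρ.mul_const R
      rw [zero_mul] at h2
      simpa using h1.add h2
    have := (htend.eventually (eventually_lt_nhds hε₁pos))
    filter_upwards [this] with n hn ξ hξ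
    rw [mem_closedBall]
    have hξR : ‖ξ‖ ≤ R := by
      rw [mem_closedBall] at hξ
      calc ‖ξ‖ = ‖ξ₀ + (ξ - ξ₀)‖ := by
            rw [show ξ₀ + (ξ - ξ₀) = ξ by ring]
        _ ≤ ‖ξ₀‖ + ‖ξ - ξ₀‖ := norm_add_le _ _
        _ ≤ ‖ξ₀‖ + r := by
            apply add_le_add_right
            rw [← dist_eq_norm]
            exact hξ
    calc dist (z n + (ρ n : ℂ) * ξ) z₀ ≤ dist (z n + (ρ n : ℂ) * ξ) (z n) + dist (z n) z₀ :=
          dist_triangle _ _ _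
      _ = ‖(ρ n : ℂ) * ξ‖ + dist (z n) z₀ := by
          rw [Complex.dist_eq]
          congr 2
          ring
      _ ≤ ρ n * R + dist (z n) z₀ := by
          rw [norm_mul, Complex.norm_real, Real.norm_eq_abs, abs_of_pos (hρpos n)]
          exact add_le_add_left (mul_le_mul_of_nonneg_left hξR (le_of_lt (hρpos n))) _
      _ ≤ ε₁ := by linarith
  -- pick n
  obtain ⟨n, hn1, hn2, hn3⟩ := (E1.and (E2.and E3)).exists
  set φ : ℂ → ℂ := fun ξ => gseq n (z n + (ρ n : ℂ) * ξ) - fseq n (z n + (ρ n : ℂ) * ξ)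
    with hφdef
  have hmapsD : ∀ ξ ∈ closedBall ξ₀ r, z n + (ρ n : ℂ) * ξ ∈ D :=
    fun ξ hξ => hK₀D (hn1 ξ hξ)
  have haffc : Continuous (fun ξ : ℂ => z n + (ρ n : ℂ) * ξ) := by fun_prop
  have hφc : ContinuousOn φ (closedBall ξ₀ r) := by
    apply ContinuousOn.sub
    · exact ((hg n).continuousOn.comp haffc.continuousOn hmapsD)
    · exact ((hfc n).comp haffc.continuousOn hmapsD)
  have hφne : ∀ ξ ∈ closedBall ξ₀ r, φ ξ ≠ 0 := by
    intro ξ hξ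
    rw [hφdef]
    exact sub_ne_zero.2 (havoid n _ (hmapsD ξ hξ))
  -- the key estimate on the sphere
  have hclose : ∀ ξ ∈ sphere ξ₀ r, ‖Ψ ξ - φ ξ‖ < ‖φ ξ‖ := by
    intro ξ hξ
    have hξK : ξ ∈ closedBall ξ₀ r := sphere_subset_closedBall hξ
    set w : ℂ := z n + (ρ n : ℂ) * ξ with hwdef
    have hwK₀ : w ∈ closedBall z₀ ε₁ := hn1 ξ hξK
    have hfw : ‖fseq n w - a‖ < m/4 := by
      calc ‖fseq n w - a‖ ≤ ‖fseq n w - f w‖ + ‖f w - a‖ := by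
            have : fseq n w - a = (fseq n w - f w) + (f w - a) := by ring
            rw [this]
            exact norm_add_le _ _
        _ < m/8 + m/8 := by
            apply add_lt_add
            · rw [← Complex.dist_eq, dist_comm]
              exact hn2 w hwK₀
            · rw [← Complex.dist_eq]
              exact hfball w hwK₀
        _ = m/4 := by ring
    have hgw : ‖g ξ - gseq n w‖ < m/4 := by
      rw [← Complex.dist_eq]
      exact hn3 ξ hξK
    have hdiff : ‖Ψ ξ - φ ξ‖ < m/2 := by
      have heq : Ψ ξ - φ ξ = (g ξ - gseq n w) + (fseq n w - a) := by
        simp only [hΨdef, hφdef, hwdef]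
        ring
      rw [heq]
      calc ‖(g ξ - gseq n w) + (fseq n w - a)‖
          ≤ ‖g ξ - gseq n w‖ + ‖fseq n w - a‖ :=
            norm_add_le _ _
        _ < m/4 + m/4 := add_lt_add hgw hfw
        _ = m/2 := by ring
    have hφlow : m/2 < ‖φ ξ‖ := by
      have h1 : m ≤ ‖Ψ ξ‖ := hmle ξ hξ
      have h2 : ‖Ψ ξ‖ ≤ ‖Ψ ξ - φ ξ‖ + ‖φ ξ‖ := by
        calc ‖Ψ ξ‖ = ‖(Ψ ξ - φ ξ) + φ ξ‖ := by ring_nf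
          _ ≤ _ := norm_add_le _ _
      linarith
    linarith
  exact no_small_perturbation ξ₀ r hrpos k hk1 Ψ v φ hfac hvc hvne hφc hφne hclose
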